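/- Let L > 0, U ≥ L, θ = U/L, C > 0, and α > 0. Suppose g : [L, U] → ℝ is continuous, nondecreasing, and satisfies v·g(v) − ∫_L^v g(u) du ≥ C·v/α for all v ∈ [L, U]. Then g(v) ≥ (C/α)·(1 + ln(v/L)) for all v ∈ [L, U]. Consequently, if additionally g(U) ≤ C, then α ≥ 1 + ln θ. -/

import Mathlib

open Real Set intervalIntegral MeasureTheory

theorem stmt_3 (L U θ C α : ℝ) (hL : 0 < L) (hLU : L ≤ U) (hθ : θ = U / L)
    (hC : 0 < C) (hα : 0 < α)
    (g : ℝ → ℝ)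
    (hg_cont : ContinuousOn g (Set.Icc L U))
    (hg_mono : MonotoneOn g (Set.Icc L U))
    (hg_ineq : ∀ v ∈ Set.Icc L U, C * v / α ≤ v * g v - ∫ u in L..v, g u) :
    (∀ v ∈ Set.Icc L U, (C / α) * (1 + Real.log (v / L)) ≤ g v) ∧
      (g U ≤ C → 1 + Real.log θ ≤ α) := by
  set F : ℝ → ℝ := fun v => ∫ u in L..v, g u with hFdef
  have hint : IntegrableOn g (uIcc L U) := by
    rw [uIcc_of_le hLU]
    exact hg_cont.integrableOn_compact isCompact_Icc
  have hFcont : ContinuousOn F (Icc L U) := by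
    have := continuousOn_primitive_interval (f := g) (μ := volume) (a := L) (b := U) hint
    rwa [uIcc_of_le hLU] at this
  set φ : ℝ → ℝ := fun v => F v / v - (C / α) * (Real.log v - Real.log L) with hφdef
  have hpos : ∀ v ∈ Icc L U, 0 < v := fun v hv => lt_of_lt_of_le hL hv.1
  -- derivative of φ at interior points
  have hφderiv : ∀ x ∈ interior (Icc L U),
      HasDerivAt φ ((g x * x - F x * 1) / x ^ 2 - (C / α) * (x⁻¹ - 0)) x := by
    intro x hx
    rw [interior_Icc] at hx
    have hxIcc : x ∈ Icc L U := Ioo_subset_Icc_self hx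
    have hx0 : 0 < x := hpos x hxIcc
    have hnhds : Icc L U ∈ nhds x := Icc_mem_nhds hx.1 hx.2
    have hcx : ContinuousAt g x := (hg_cont x hxIcc).continuousAt hnhds
    have hintx : IntervalIntegrable g volume L x := by
      apply hint.intervalIntegrable.mono_set
      rw [uIcc_of_le hLU, uIcc_of_le hxIcc.1]
      exact Icc_subset_Icc le_rfl hxIcc.2
    have hmeas : StronglyMeasurableAtFilter g (nhds x) volume :=
      ((hg_cont.mono Ioo_subset_Icc_self).stronglyMeasurableAtFilter isOpen_Ioo) x hx
    have hF' : HasDerivAt F (g x) x :=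
      integral_hasDerivAt_right hintx hmeas hcx
    have hdiv : HasDerivAt (fun v => F v / v) ((g x * x - F x * 1) / x ^ 2) x :=
      hF'.div (hasDerivAt_id x) hx0.ne'
    have hlog : HasDerivAt (fun v => (C / α) * (Real.log v - Real.log L))
        ((C / α) * (x⁻¹ - 0)) x :=
      (((Real.hasDerivAt_log hx0.ne').sub (hasDerivAt_const x _))).const_mul _
    exact hdiv.sub hlog
  have hφmono : MonotoneOn φ (Icc L U) := by
    apply monotoneOn_of_deriv_nonneg (convex_Icc L U)
    · apply ContinuousOn.sub
      · exact hFcont.div continuousOn_id (fun v hv => (hpos v hv).ne')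
      · exact continuousOn_const.mul ((Real.continuousOn_log.mono
          (fun v hv => (hpos v hv).ne')).sub continuousOn_const)
    · intro x hx
      exact ((hφderiv x hx).differentiableAt).differentiableWithinAt
    · intro x hx
      rw [(hφderiv x hx).deriv]
      rw [interior_Icc] at hx
      have hxIcc : x ∈ Icc L U := Ioo_subset_Icc_self hx
      have hx0 : 0 < x := hpos x hxIcc
      have h1 := hg_ineq x hxIcc
      have hx2 : (0:ℝ) < x ^ 2 := by positivity
      rw [sub_nonneg, sub_zero, mul_one]
      rw [le_div_iff₀ hx2]
      have : (C / α) * x⁻¹ * x ^ 2 = C * x / α := by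
        field_simp
      rw [this]
      calc C * x / α ≤ x * g x - F x := h1
        _ = g x * x - F x := by ring
  have hφL : φ L = 0 := by
    simp [hφdef, hFdef, intervalIntegral.integral_same]
  have key : ∀ v ∈ Icc L U, (C / α) * (1 + Real.log (v / L)) ≤ g v := by
    intro v hv
    have hv0 : 0 < v := hpos v hv
    have hmono := hφmono (left_mem_Icc.mpr hLU) hv hv.1
    rw [hφL] at hmono
    -- hmono : 0 ≤ F v / v - (C/α)*(log v - log L)
    have h1 := hg_ineq v hv
    have h2 : (C / α) * (Real.log v - Real.log L) ≤ F v / v := by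
      simp only [hφdef] at hmono; linarith
    have h3 : C * v / α + F v ≤ v * g v := by linarith
    have h4 : C / α + F v / v ≤ g v := by
      rw [← mul_le_mul_iff_right₀ hv0]
      calc v * (C / α + F v / v) = C * v / α + F v := by field_simp
        _ ≤ v * g v := h3
    rw [Real.log_div hv0.ne' hL.ne']
    linarith
  refine ⟨key, fun hgU => ?_⟩
  have hU := key U (right_mem_Icc.mpr hLU)
  have hθ1 : 1 ≤ θ := by rw [hθ]; exact (one_le_div hL).mpr hLU
  have hlogθ : 0 ≤ Real.log θ := Real.log_nonneg hθ1
  have h5 : (C / α) * (1 + Real.log θ) ≤ C := by rw [hθ]; linarith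
  have h6 : C * (1 + Real.log θ) ≤ C * α := by
    have := mul_le_mul_of_nonneg_left h5 hα.le
    calc C * (1 + Real.log θ) = α * ((C / α) * (1 + Real.log θ)) := by field_simp
      _ ≤ α * C := this
      _ = C * α := mul_comm _ _
  exact le_of_mul_le_mul_left (by linarith [h6]) hC
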